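/- Let l ≥ 2 and let p = s_{i_1}s_{i_2}⋯s_{i_l} be a product of short conjugates of s_1 = bwb in G = ℤ/2 * ℤ/3 in which at least one pair of consecutive terms does not join well. Then for every prescribed j ∈ {0,1,2} there is a finite sequence of Hurwitz moves transforming the sequence (s_{i_1},…,s_{i_l}) into a sequence (s_{j_1},…,s_{j_l}) of short conjugates of s_1 (with the same number of terms) whose first term is s_{j_1} = s_j; similarly, for every prescribed j ∈ {0,1,2} there is a finite sequence of Hurwitz moves producing such a sequence of short conjugates whose last term is s_j. -/

import Mathlib

/-- `G = ℤ/2 * ℤ/3`, the free product of cyclic groups of orders 2 and 3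
(isomorphic to `PSL(2,ℤ)`). -/
abbrev G23 := Monoid.Coprod (Multiplicative (ZMod 2)) (Multiplicative (ZMod 3))

/-- The generator `w` of the `ℤ/2` factor. -/
def w : G23 := Monoid.Coprod.inl (Multiplicative.ofAdd (1 : ZMod 2))

/-- The generator `b` of the `ℤ/3` factor. -/
def b : G23 := Monoid.Coprod.inr (Multiplicative.ofAdd (1 : ZMod 3))

/-- `s₀ = wb²`. -/
def s0 : G23 := w * b ^ 2

/-- `s₁ = bwb`. -/
def s1 : G23 := b * w * b

/-- `s₂ = b²w`. -/
def s2 : G23 := b ^ 2 * w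

/-- The letters `w`, `b`, `b²` from which reduced expressions are built. -/
inductive Letter : Type
  | w : Letter
  | b : Letter
  | b2 : Letter
deriving DecidableEq

/-- Evaluation of a letter in `G23`. -/
def Letter.eval : Letter → G23
  | Letter.w => _root_.w
  | Letter.b => _root_.b
  | Letter.b2 => _root_.b ^ 2

/-- The formal inverse of a letter (`w⁻¹ = w`, `b⁻¹ = b²`, `(b²)⁻¹ = b`). -/
def Letter.inv : Letter → Letter
  | Letter.w => Letter.w
  | Letter.b => Letter.b2
  | Letter.b2 => Letter.b

/-- Evaluation of a word in the letters `w`, `b`, `b²`. -/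
def wordEval (L : List Letter) : G23 := (L.map Letter.eval).prod

/-- A word is reduced if no two consecutive letters are both equal to `w` or both
powers of `b`; i.e. the letters alternate between `w` and powers of `b`. -/
def Reduced (L : List Letter) : Prop :=
  List.Chain' (fun x y => x = Letter.w ↔ ¬ y = Letter.w) L

/-- The length `l(a)` of an element of `G23`: the number of letters in its reduced
expression (`l(1) = 0`). -/
noncomputable def len (g : G23) : ℕ :=
  sInf {n : ℕ | ∃ L : List Letter, Reduced L ∧ wordEval L = g ∧ L.length = n}

/-- The short conjugates of `s₁`. -/
def shortSet : Set G23 := {s0, s1, s2}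

/-- Two conjugates of `s₁` join well if `l(gh) ≥ max (l(g), l(h))`. -/
def JoinsWell (g h : G23) : Prop := max (len g) (len h) ≤ len (g * h)

/-- A single Hurwitz move on a finite sequence of elements of a group: some consecutive
pair `(a, b)` is replaced by `(b, b⁻¹ * a * b)` or by `(a * b * a⁻¹, a)`. -/
def HurwitzMove {G : Type*} [Group G] (L L' : List G) : Prop :=
  ∃ (p : List G) (x y : G) (t : List G),
    L = p ++ x :: y :: t ∧
    (L' = p ++ y :: (y⁻¹ * x * y) :: t ∨ L' = p ++ (x * y * x⁻¹) :: x :: t)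

/-- A finite sequence of Hurwitz moves. -/
def HurwitzEquiv {G : Type*} [Group G] : List G → List G → Prop :=
  Relation.ReflTransGen HurwitzMove


-- basic relations
lemma w_mul_w : w * w = 1 := by
  rw [w, ← map_mul]
  have : (Multiplicative.ofAdd (1 : ZMod 2)) * Multiplicative.ofAdd (1 : ZMod 2) = 1 := by decide
  rw [this, map_one]

lemma b3 : b * (b * b) = 1 := by
  rw [b, ← map_mul, ← map_mul]
  have : (Multiplicative.ofAdd (1 : ZMod 3)) * (Multiplicative.ofAdd (1 : ZMod 3) * Multiplicative.ofAdd (1 : ZMod 3)) = 1 := by decide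
  rw [this, map_one]

lemma w_w (g : G23) : w * (w * g) = g := by rw [← mul_assoc, w_mul_w, one_mul]
lemma b_b_b (g : G23) : b * (b * (b * g)) = g := by
  rw [← mul_assoc, ← mul_assoc, mul_assoc b b b, b3, one_mul]

lemma hs01 : s0 * s1 = b := by
  simp only [s0, s1, pow_two, mul_assoc, w_w, b_b_b, w_mul_w, b3, mul_one, one_mul]
lemma hs12 : s1 * s2 = b := by
  simp only [s1, s2, pow_two, mul_assoc, w_w, b_b_b, w_mul_w, b3, mul_one, one_mul]
lemma hs20 : s2 * s0 = b := by
  simp only [s2, s0, pow_two, mul_assoc, w_w, b_b_b, w_mul_w, b3, mul_one, one_mul]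

def sc : ZMod 3 → G23 := fun i => if i = 0 then s0 else if i = 1 then s1 else s2

lemma s_0 : sc 0 = s0 := rfl
lemma s_1 : sc 1 = s1 := rfl
lemma s_2 : sc 2 = s2 := rfl

lemma z3cases : ∀ i : ZMod 3, i = 0 ∨ i = 1 ∨ i = 2 := by decide
lemma z31 : ∀ i : ZMod 3, i + 1 + 1 = i + 2 := by decide
lemma z32 : ∀ i : ZMod 3, i + 2 + 1 = i := by decide
lemma z33 : ∀ i : ZMod 3, i + 2 + 2 = i + 1 := by decide
lemma z34 : ∀ i : ZMod 3, i + 1 + 2 = i := by decide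

lemma hkey : ∀ i : ZMod 3, sc i * sc (i + 1) = b := by
  intro i
  rcases z3cases i with rfl | rfl | rfl
  · rw [s_0, show (0 : ZMod 3) + 1 = 1 from rfl, s_1, hs01]
  · rw [s_1, show (1 : ZMod 3) + 1 = 2 from rfl, s_2, hs12]
  · rw [s_2, show (2 : ZMod 3) + 1 = 0 by decide, s_0, hs20]

lemma conjR (i : ZMod 3) : (sc (i + 1))⁻¹ * sc i * sc (i + 1) = sc (i + 2) := by
  have h2 := hkey (i + 1); rw [z31] at h2
  rw [mul_assoc, hkey i, ← h2, ← mul_assoc, inv_mul_cancel, one_mul]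

lemma conjL (i : ZMod 3) : sc i * sc (i + 1) * (sc i)⁻¹ = sc (i + 2) := by
  have h2 := hkey (i + 2); rw [z32] at h2
  rw [hkey i, ← h2, mul_assoc, mul_inv_cancel, mul_one]

lemma hmoveR (P T : List G23) (i : ZMod 3) :
    HurwitzMove (P ++ sc i :: sc (i + 1) :: T) (P ++ sc (i + 1) :: sc (i + 2) :: T) :=
  ⟨P, sc i, sc (i + 1), T, rfl, Or.inl (by rw [conjR i])⟩

lemma hmoveL (P T : List G23) (i : ZMod 3) :
    HurwitzMove (P ++ sc i :: sc (i + 1) :: T) (P ++ sc (i + 2) :: sc i :: T) :=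
  ⟨P, sc i, sc (i + 1), T, rfl, Or.inr (by rw [conjL i])⟩

lemma rotTo (P T : List G23) (i j : ZMod 3) :
    HurwitzEquiv (P ++ sc i :: sc (i + 1) :: T) (P ++ sc j :: sc (j + 1) :: T) := by
  have hj : j = i ∨ j = i + 1 ∨ j = i + 2 := by
    rcases z3cases i with rfl | rfl | rfl <;> rcases z3cases j with rfl | rfl | rfl <;> decide
  rcases hj with rfl | rfl | rfl
  · exact Relation.ReflTransGen.refl
  · rw [z31]
    exact Relation.ReflTransGen.single (hmoveR P T i)
  · rw [z32]
    refine Relation.ReflTransGen.head (hmoveR P T i) ?_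
    have := hmoveR P T (i + 1)
    rw [z31, z34] at this
    exact Relation.ReflTransGen.single this

def ms (J : List (ZMod 3)) : List G23 := J.map sc

lemma ms_split (P T : List (ZMod 3)) (i j : ZMod 3) :
    ms (P ++ i :: j :: T) = ms P ++ sc i :: sc j :: ms T := by
  simp [ms]

lemma rotTo' (P T : List (ZMod 3)) (i j : ZMod 3) :
    HurwitzEquiv (ms (P ++ i :: (i + 1) :: T)) (ms (P ++ j :: (j + 1) :: T)) := by
  rw [ms_split, ms_split]; exact rotTo (ms P) (ms T) i j

lemma hmoveR' (P T : List (ZMod 3)) (i : ZMod 3) :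
    HurwitzMove (ms (P ++ i :: (i + 1) :: T)) (ms (P ++ (i + 1) :: (i + 2) :: T)) := by
  rw [ms_split, ms_split]; exact hmoveR (ms P) (ms T) i

lemma hmoveL' (P T : List (ZMod 3)) (i : ZMod 3) :
    HurwitzMove (ms (P ++ i :: (i + 1) :: T)) (ms (P ++ (i + 2) :: i :: T)) := by
  rw [ms_split, ms_split]; exact hmoveL (ms P) (ms T) i

lemma toFront (P : List (ZMod 3)) : ∀ (i : ZMod 3) (T : List (ZMod 3)),
    ∃ (k : ZMod 3) (T' : List (ZMod 3)), T'.length = P.length + T.length ∧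
      HurwitzEquiv (ms (P ++ i :: (i + 1) :: T)) (ms (k :: (k + 1) :: T')) := by
  induction P using List.reverseRecOn with
  | nil => exact fun i T => ⟨i, T, by simp, Relation.ReflTransGen.refl⟩
  | append_singleton P₀ a IH =>
    intro i T
    obtain ⟨k, T', hlen, e3⟩ := IH (a + 2) ((a + 2) :: T)
    refine ⟨k, T', by simp at hlen ⊢; omega, ?_⟩
    have e1 : HurwitzEquiv (ms ((P₀ ++ [a]) ++ i :: (i + 1) :: T))
        (ms ((P₀ ++ [a]) ++ (a + 1) :: (a + 1 + 1) :: T)) := rotTo' _ _ _ _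
    rw [z31] at e1
    have heq : (P₀ ++ [a]) ++ (a + 1) :: (a + 2) :: T = P₀ ++ a :: (a + 1) :: ((a + 2) :: T) := by
      simp
    rw [heq] at e1
    have e2 := hmoveL' P₀ ((a + 2) :: T) a
    rw [z32] at e3
    exact (e1.tail e2).trans e3

lemma toBack (T : List (ZMod 3)) : ∀ (i : ZMod 3) (P : List (ZMod 3)),
    ∃ (k : ZMod 3) (P' : List (ZMod 3)), P'.length = P.length + T.length ∧
      HurwitzEquiv (ms (P ++ i :: (i + 1) :: T)) (ms (P' ++ [k, k + 1])) := by
  induction T with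
  | nil => exact fun i P => ⟨i, P, by simp, Relation.ReflTransGen.refl⟩
  | cons c T₀ IH =>
    intro i P
    obtain ⟨k, P', hlen, e3⟩ := IH c (P ++ [c + 1])
    refine ⟨k, P', by simp at hlen ⊢; omega, ?_⟩
    have e1 : HurwitzEquiv (ms (P ++ i :: (i + 1) :: (c :: T₀)))
        (ms (P ++ (c + 1) :: (c + 1 + 1) :: (c :: T₀))) := rotTo' _ _ _ _
    rw [z31] at e1
    have heq : P ++ (c + 1) :: (c + 2) :: (c :: T₀)
        = (P ++ [c + 1]) ++ (c + 2) :: c :: T₀ := by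
      simp
    rw [heq] at e1
    have e2 := hmoveR' (P ++ [c + 1]) T₀ (c + 2)
    rw [z32, z33] at e2
    exact (e1.tail e2).trans e3

instance : Fintype Letter :=
  ⟨⟨{Letter.w, Letter.b, Letter.b2}, by decide⟩, fun x => by cases x <;> decide⟩

-- the permutation representation
def pp : Equiv.Perm (Fin 5) := Equiv.swap 3 4
def qq : Equiv.Perm (Fin 5) := Equiv.swap 1 2 * Equiv.swap 2 3

lemma hpp : pp ^ 2 = 1 := by decide
lemma hqq : qq ^ 3 = 1 := by decide

def f2 : Multiplicative (ZMod 2) →* Equiv.Perm (Fin 5) where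
  toFun x := pp ^ (Multiplicative.toAdd x).val
  map_one' := rfl
  map_mul' x y := by
    show pp ^ ((Multiplicative.toAdd x + Multiplicative.toAdd y).val) = _
    rw [ZMod.val_add, ← pow_add]
    conv_rhs => rw [← Nat.div_add_mod ((Multiplicative.toAdd x).val + (Multiplicative.toAdd y).val) 2]
    rw [pow_add, pow_mul, hpp, one_pow, one_mul]

def f3 : Multiplicative (ZMod 3) →* Equiv.Perm (Fin 5) where
  toFun x := qq ^ (Multiplicative.toAdd x).val
  map_one' := rfl
  map_mul' x y := by
    show qq ^ ((Multiplicative.toAdd x + Multiplicative.toAdd y).val) = _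
    rw [ZMod.val_add, ← pow_add]
    conv_rhs => rw [← Nat.div_add_mod ((Multiplicative.toAdd x).val + (Multiplicative.toAdd y).val) 3]
    rw [pow_add, pow_mul, hqq, one_pow, one_mul]

def φ : G23 →* Equiv.Perm (Fin 5) := Monoid.Coprod.lift f2 f3

lemma φ_w : φ w = pp := by
  rw [w, φ, Monoid.Coprod.lift_apply_inl]
  show pp ^ (1 : ZMod 2).val = pp
  rw [show (1 : ZMod 2).val = 1 from rfl, pow_one]

lemma φ_b : φ b = qq := by
  rw [b, φ, Monoid.Coprod.lift_apply_inr]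
  show qq ^ (1 : ZMod 3).val = qq
  rw [show (1 : ZMod 3).val = 1 from rfl, pow_one]

def lperm : Letter → Equiv.Perm (Fin 5)
  | Letter.w => pp
  | Letter.b => qq
  | Letter.b2 => qq * qq

lemma φ_word (L : List Letter) : φ (wordEval L) = (L.map lperm).prod := by
  induction L with
  | nil => simp [wordEval]
  | cons x t ih =>
    have : wordEval (x :: t) = x.eval * wordEval t := by simp [wordEval]
    rw [this, map_mul, ih]
    cases x <;> simp [Letter.eval, lperm, φ_w, φ_b, map_pow, pow_two]

lemma len_ub (g : G23) (W : List Letter) (hr : Reduced W) (he : wordEval W = g) :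
    len g ≤ W.length :=
  Nat.sInf_le ⟨W, hr, he, rfl⟩

lemma len_lb3 (g : G23) (W : List Letter) (hr : Reduced W) (he : wordEval W = g)
    (hno : ∀ M : List Letter, M.length ≤ 2 → (M.map lperm).prod ≠ (W.map lperm).prod) :
    3 ≤ len g := by
  have hSne : {n : ℕ | ∃ L : List Letter, Reduced L ∧ wordEval L = g ∧ L.length = n}.Nonempty :=
    ⟨W.length, W, hr, he, rfl⟩
  obtain ⟨L1, hr1, he1, hl1⟩ := Nat.sInf_mem hSne
  by_contra hlt
  push_neg at hlt
  have hlen : L1.length ≤ 2 := by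
    have : len g = sInf {n : ℕ | ∃ L : List Letter, Reduced L ∧ wordEval L = g ∧ L.length = n} := rfl
    omega
  refine hno L1 hlen ?_
  rw [← φ_word, he1, ← he, φ_word]

lemma ub0 : len s0 ≤ 3 :=
  le_trans (len_ub s0 [Letter.w, Letter.b2] (by simp [Reduced, List.Chain', List.isChain_cons_cons])
    (by simp [wordEval, Letter.eval, s0, pow_two, mul_assoc, b_b_b, w_w, mul_one])) (by norm_num)
lemma ub1 : len s1 ≤ 3 :=
  le_trans (len_ub s1 [Letter.b, Letter.w, Letter.b] (by simp [Reduced, List.Chain', List.isChain_cons_cons])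
    (by simp [wordEval, Letter.eval, s1, pow_two, mul_assoc, b_b_b, w_w, mul_one])) (by norm_num)
lemma ub2 : len s2 ≤ 3 :=
  le_trans (len_ub s2 [Letter.b2, Letter.w] (by simp [Reduced, List.Chain', List.isChain_cons_cons])
    (by simp [wordEval, Letter.eval, s2, pow_two, mul_assoc, b_b_b, w_w, mul_one])) (by norm_num)

lemma lb00 : 3 ≤ len (s0 * s0) :=
  len_lb3 _ [Letter.w, Letter.b2, Letter.w, Letter.b2] (by simp [Reduced, List.Chain', List.isChain_cons_cons])
    (by simp [wordEval, Letter.eval, s0, pow_two, mul_assoc, b_b_b, w_w, mul_one])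
    (by intro M hM
        rcases M with _|⟨x,M⟩
        · decide
        rcases M with _|⟨y,M⟩
        · revert x; decide
        rcases M with _|⟨z,M⟩
        · revert x y; decide
        · simp at hM)

lemma lb02 : 3 ≤ len (s0 * s2) :=
  len_lb3 _ [Letter.w, Letter.b, Letter.w] (by simp [Reduced, List.Chain', List.isChain_cons_cons])
    (by simp [wordEval, Letter.eval, s0, s2, pow_two, mul_assoc, b_b_b, w_w, mul_one])
    (by intro M hM
        rcases M with _|⟨x,M⟩
        · decide
        rcases M with _|⟨y,M⟩
        · revert x; decide
        rcases M with _|⟨z,M⟩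
        · revert x y; decide
        · simp at hM)

lemma lb10 : 3 ≤ len (s1 * s0) :=
  len_lb3 _ [Letter.b, Letter.w, Letter.b, Letter.w, Letter.b2] (by simp [Reduced, List.Chain', List.isChain_cons_cons])
    (by simp [wordEval, Letter.eval, s1, s0, pow_two, mul_assoc, b_b_b, w_w, mul_one])
    (by intro M hM
        rcases M with _|⟨x,M⟩
        · decide
        rcases M with _|⟨y,M⟩
        · revert x; decide
        rcases M with _|⟨z,M⟩
        · revert x y; decide
        · simp at hM)

lemma lb11 : 3 ≤ len (s1 * s1) :=
  len_lb3 _ [Letter.b, Letter.w, Letter.b2, Letter.w, Letter.b] (by simp [Reduced, List.Chain', List.isChain_cons_cons])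
    (by simp [wordEval, Letter.eval, s1, pow_two, mul_assoc, b_b_b, w_w, mul_one])
    (by intro M hM
        rcases M with _|⟨x,M⟩
        · decide
        rcases M with _|⟨y,M⟩
        · revert x; decide
        rcases M with _|⟨z,M⟩
        · revert x y; decide
        · simp at hM)

lemma lb21 : 3 ≤ len (s2 * s1) :=
  len_lb3 _ [Letter.b2, Letter.w, Letter.b, Letter.w, Letter.b] (by simp [Reduced, List.Chain', List.isChain_cons_cons])
    (by simp [wordEval, Letter.eval, s2, s1, pow_two, mul_assoc, b_b_b, w_w, mul_one])
    (by intro M hM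
        rcases M with _|⟨x,M⟩
        · decide
        rcases M with _|⟨y,M⟩
        · revert x; decide
        rcases M with _|⟨z,M⟩
        · revert x y; decide
        · simp at hM)

lemma lb22 : 3 ≤ len (s2 * s2) :=
  len_lb3 _ [Letter.b2, Letter.w, Letter.b2, Letter.w] (by simp [Reduced, List.Chain', List.isChain_cons_cons])
    (by simp [wordEval, Letter.eval, s2, pow_two, mul_assoc, b_b_b, w_w, mul_one])
    (by intro M hM
        rcases M with _|⟨x,M⟩
        · decide
        rcases M with _|⟨y,M⟩
        · revert x; decide
        rcases M with _|⟨z,M⟩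
        · revert x y; decide
        · simp at hM)

lemma joins_good : ∀ a c : ZMod 3, c = a ∨ c = a + 2 → JoinsWell (sc a) (sc c) := by
  have H : ∀ (x y : G23), len x ≤ 3 → len y ≤ 3 → 3 ≤ len (x * y) → JoinsWell x y :=
    fun x y hx hy hxy => max_le (le_trans hx hxy) (le_trans hy hxy)
  intro a c h
  rcases z3cases a with rfl | rfl | rfl <;>
    rcases h with rfl | rfl <;>
      simp only [s_0, s_1, s_2, show (0:ZMod 3)+2 = 2 from rfl, show (1:ZMod 3)+2 = 0 by decide,
        show (2:ZMod 3)+2 = 1 by decide]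
  · exact H _ _ ub0 ub0 lb00
  · exact H _ _ ub0 ub2 lb02
  · exact H _ _ ub1 ub1 lb11
  · exact H _ _ ub1 ub0 lb10
  · exact H _ _ ub2 ub2 lb22
  · exact H _ _ ub2 ub1 lb21

lemma s_mem : ∀ i : ZMod 3, sc i ∈ shortSet := by
  intro i
  rcases z3cases i with rfl | rfl | rfl <;> simp [shortSet, s_0, s_1, s_2]

lemma mem_s {g : G23} (h : g ∈ shortSet) : ∃ i, g = sc i := by
  simp only [shortSet, Set.mem_insert_iff, Set.mem_singleton_iff] at h
  rcases h with rfl | rfl | rfl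
  exacts [⟨0, s_0.symm⟩, ⟨1, s_1.symm⟩, ⟨2, s_2.symm⟩]

lemma list_ms : ∀ l : List G23, (∀ g ∈ l, g ∈ shortSet) → ∃ J, l = ms J := by
  intro l
  induction l with
  | nil => exact fun _ => ⟨[], rfl⟩
  | cons x l ih =>
    intro h
    obtain ⟨J, hJ⟩ := ih fun g hg => h g (List.mem_cons_of_mem _ hg)
    obtain ⟨i, hi⟩ := mem_s (h x (List.mem_cons_self))
    exact ⟨i :: J, by rw [hJ, hi]; rfl⟩

lemma chain'_bad {α : Type*} (R : α → α → Prop) :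
    ∀ l : List α, ¬ List.Chain' R l → ∃ p x y t, l = p ++ x :: y :: t ∧ ¬ R x y
  | [], h => absurd List.isChain_nil h
  | [x], h => absurd (List.isChain_singleton x) h
  | x :: y :: t, h => by
    unfold List.Chain' at h; rw [List.isChain_cons_cons] at h
    by_cases hr : R x y
    · have h2 : ¬ List.Chain' R (y :: t) := fun hc => h ⟨hr, hc⟩
      obtain ⟨p, u, v, t', he, hn⟩ := chain'_bad R (y :: t) h2
      exact ⟨x :: p, u, v, t', by rw [he]; rfl, hn⟩
    · exact ⟨[], x, y, t, rfl, hr⟩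


/-- **Proposition (short).**  If `p = s_{i₁}⋯s_{i_l}` (`l ≥ 2`) is a product of short
conjugates of `s₁` in which some pair of consecutive terms does not join well, then for any
prescribed short conjugate `s` there is a finite sequence of Hurwitz moves producing a
sequence of short conjugates, of the same length, whose first term is `s`; and likewise one
whose last term is `s`. -/
theorem short_proposition (L : List G23) (hlen : 2 ≤ L.length)
    (hshort : ∀ g ∈ L, g ∈ shortSet)
    (hbad : ¬ List.Chain' JoinsWell L) :
    ∀ s ∈ shortSet,
      (∃ L' : List G23, HurwitzEquiv L L' ∧ L'.length = L.length ∧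
        (∀ g ∈ L', g ∈ shortSet) ∧ L'.head? = some s) ∧
      (∃ L' : List G23, HurwitzEquiv L L' ∧ L'.length = L.length ∧
        (∀ g ∈ L', g ∈ shortSet) ∧ L'.getLast? = some s) := by

  intro σ hσ
  obtain ⟨j, rfl⟩ := mem_s hσ
  obtain ⟨p, x, y, t, hL, hxy⟩ := chain'_bad JoinsWell L hbad
  have hx : x ∈ shortSet := hshort x (by rw [hL]; simp)
  have hy : y ∈ shortSet := hshort y (by rw [hL]; simp)
  obtain ⟨a, rfl⟩ := mem_s hx
  obtain ⟨c, rfl⟩ := mem_s hy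
  have hc : c = a + 1 := by
    have h3 : c = a ∨ c = a + 1 ∨ c = a + 2 := by
      rcases z3cases a with rfl | rfl | rfl <;> rcases z3cases c with rfl | rfl | rfl <;> decide
    rcases h3 with h3 | h3 | h3
    · exact absurd (joins_good a c (Or.inl h3)) hxy
    · exact h3
    · exact absurd (joins_good a c (Or.inr h3)) hxy
  subst hc
  obtain ⟨Jp, hJp⟩ := list_ms p fun g hg => hshort g (by rw [hL]; simp [hg])
  obtain ⟨Jt, hJt⟩ := list_ms t fun g hg => hshort g (by rw [hL]; simp [hg])
  have hL2 : L = ms (Jp ++ a :: (a + 1) :: Jt) := by rw [hL, hJp, hJt, ms_split]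
  have hLlen : L.length = Jp.length + Jt.length + 2 := by
    rw [hL2]; simp [ms]; omega
  constructor
  · obtain ⟨k, T', hlen', e⟩ := toFront Jp a Jt
    have e2 : HurwitzEquiv (ms (k :: (k + 1) :: T')) (ms (j :: (j + 1) :: T')) := by
      have := rotTo' [] T' k j
      simpa using this
    refine ⟨ms (j :: (j + 1) :: T'), ?_, ?_, ?_, ?_⟩
    · rw [hL2]; exact e.trans e2
    · simp [ms, hLlen]; omega
    · intro g hg
      simp only [ms, List.mem_map] at hg
      obtain ⟨i, _, rfl⟩ := hg
      exact s_mem i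
    · simp [ms]
  · obtain ⟨k, P', hlen', e⟩ := toBack Jt a Jp
    have e2 : HurwitzEquiv (ms (P' ++ [k, k + 1])) (ms (P' ++ [j + 2, j])) := by
      have := rotTo' P' [] k (j + 2)
      rw [z32] at this
      exact this
    refine ⟨ms (P' ++ [j + 2, j]), ?_, ?_, ?_, ?_⟩
    · rw [hL2]; exact e.trans e2
    · simp [ms, hLlen]; omega
    · intro g hg
      simp only [ms, List.mem_map] at hg
      obtain ⟨i, _, rfl⟩ := hg
      exact s_mem i
    · rw [show ms (P' ++ [j + 2, j]) = (ms (P' ++ [j + 2])) ++ [sc j] by simp [ms]]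
      exact List.getLast?_concat
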